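/- Let n ≥ 2 be an integer and set m = n−1. Define the map φ : ℝ^m → ℝ^m by φ(x)_j = x_j/(1 + ∑_{k=1}^m x_k), let S = {x ∈ ℝ^m : x_j > 0 for all j}, and let Δ° = {t ∈ ℝ^m : t_j > 0 for all j and ∑_{j=1}^m t_j < 1} be the open m-simplex. Then φ restricts to a bijection from S onto Δ°, and the pushforward under φ of the measure on S with density x ↦ (1 + ∑_j x_j)^{−n} with respect to Lebesgue measure equals the Lebesgue measure restricted to Δ°. (This is the paper's Lemma: the measure ∏ dx_j/(1+∑x_j)^n corresponds to the flat measure ∏ dt_j on the simplex.) -/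

import Mathlib

open MeasureTheory

noncomputable def sumL (m : ℕ) : (Fin m → ℝ) →L[ℝ] ℝ := ∑ k : Fin m, ContinuousLinearMap.proj k

noncomputable def Dphi (m : ℕ) (x : Fin m → ℝ) : (Fin m → ℝ) →L[ℝ] (Fin m → ℝ) :=
  ContinuousLinearMap.pi fun j =>
    x j • ((-((1 + ∑ k, x k) ^ 2)⁻¹) • sumL m) + (1 + ∑ k, x k)⁻¹ • ContinuousLinearMap.proj j

lemma hasFDeriv_phi (m : ℕ) (x : Fin m → ℝ) (hx : (1 + ∑ k, x k) ≠ 0) :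
    HasFDerivAt (fun y : Fin m → ℝ => fun j => y j / (1 + ∑ k, y k)) (Dphi m x) x := by
  apply hasFDerivAt_pi''
  intro j
  have h0 : HasFDerivAt (fun y : Fin m → ℝ => ∑ k, y k) (sumL m) x :=
    HasFDerivAt.fun_sum fun k _ => hasFDerivAt_apply k x
  have hd : HasFDerivAt (fun y : Fin m → ℝ => 1 + ∑ k, y k) (sumL m) x := by
    exact h0.const_add 1
  have hinv : HasFDerivAt (fun y : Fin m → ℝ => (1 + ∑ k, y k)⁻¹)
      ((-((1 + ∑ k, x k) ^ 2)⁻¹) • sumL m) x :=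
    HasDerivAt.comp_hasFDerivAt x (hasDerivAt_inv hx) hd
  have hc : HasFDerivAt (fun y : Fin m → ℝ => y j)
      (ContinuousLinearMap.proj j : (Fin m → ℝ) →L[ℝ] ℝ) x := hasFDerivAt_apply j x
  have := hc.fun_mul hinv
  simp only [div_eq_mul_inv]
  convert this using 1 <;> rfl

lemma det_Dphi (m : ℕ) (x : Fin m → ℝ) (hx : (1 + ∑ k, x k) ≠ 0) :
    (Dphi m x).det = ((1 + ∑ k, x k)⁻¹) ^ (m + 1) := by
  have h1 : LinearMap.toMatrix' ((Dphi m x) : (Fin m → ℝ) →ₗ[ℝ] (Fin m → ℝ))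
      = ((1 + ∑ k, x k)⁻¹ : ℝ) • (1 + Matrix.replicateCol (Fin 1) (fun j => -(x j) * (1 + ∑ k, x k)⁻¹)
          * Matrix.replicateRow (Fin 1) (fun _ : Fin m => (1:ℝ))) := by
    ext i j
    simp [LinearMap.toMatrix'_apply, Dphi, sumL, Matrix.one_apply, Matrix.mul_apply,
      ContinuousLinearMap.proj_apply, Finset.sum_ite_eq']
    rcases eq_or_ne i j with h | h
    · simp [h]; field_simp; ring
    · simp [h]
      field_simp
  rw [show (Dphi m x).det = (LinearMap.toMatrix'
      ((Dphi m x) : (Fin m → ℝ) →ₗ[ℝ] (Fin m → ℝ))).det from (LinearMap.det_toMatrix' _).symm,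
    h1, Matrix.det_smul]
  erw [Matrix.det_one_add_replicateCol_mul_replicateRow (ι := Fin 1)]
  simp only [dotProduct, Fintype.card_fin, one_mul]
  have h2 : ∑ j, (-(x j) * (1 + ∑ k, x k)⁻¹) = -((∑ k, x k) * (1 + ∑ k, x k)⁻¹) := by
    rw [← Finset.sum_mul]
    simp [Finset.sum_neg_distrib]
  rw [h2]
  have h3 : 1 + -((∑ k, x k) * (1 + ∑ k, x k)⁻¹) = (1 + ∑ k, x k)⁻¹ := by
    field_simp
    ring
  rw [h3, pow_succ]

theorem stmt7 (n m : ℕ) (hn : 2 ≤ n) (hm : m = n - 1)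
    (φ : (Fin m → ℝ) → (Fin m → ℝ)) (hφ : φ = fun x j => x j / (1 + ∑ k, x k))
    (S : Set (Fin m → ℝ)) (hS : S = {x | ∀ j, 0 < x j})
    (T : Set (Fin m → ℝ)) (hT : T = {t | (∀ j, 0 < t j) ∧ ∑ j, t j < 1}) :
    Set.BijOn φ S T ∧
      Measure.map φ (((volume : Measure (Fin m → ℝ)).restrict S).withDensity
          fun x => ENNReal.ofReal ((1 + ∑ j, x j) ^ (-(n : ℤ))))
        = (volume : Measure (Fin m → ℝ)).restrict T := by
  have hnm : n = m + 1 := by omega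
  subst hφ hS hT
  set S : Set (Fin m → ℝ) := {x | ∀ j, 0 < x j} with hS
  set T : Set (Fin m → ℝ) := {t | (∀ j, 0 < t j) ∧ ∑ j, t j < 1} with hT
  set φ : (Fin m → ℝ) → (Fin m → ℝ) := fun x j => x j / (1 + ∑ k, x k) with hφ
  set ψ : (Fin m → ℝ) → (Fin m → ℝ) := fun t j => t j / (1 - ∑ k, t k) with hψ
  -- basic positivity facts
  have hSpos : ∀ x ∈ S, 0 < 1 + ∑ k, x k := by
    intro x hx
    have : (0:ℝ) ≤ ∑ k, x k := Finset.sum_nonneg fun k _ => (hx k).le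
    linarith
  have hTpos : ∀ t ∈ T, 0 < 1 - ∑ k, t k := by
    intro t ht
    have := ht.2
    linarith
  have hmapsφ : Set.MapsTo φ S T := by
    intro x hx
    have h1 := hSpos x hx
    constructor
    · intro j; exact div_pos (hx j) h1
    · rw [← Finset.sum_div]
      rw [div_lt_one h1]
      linarith
  have hmapsψ : Set.MapsTo ψ T S := by
    intro t ht j
    exact div_pos (ht.1 j) (hTpos t ht)
  have hsumφ : ∀ x : Fin m → ℝ, ∑ j, φ x j = (∑ k, x k) / (1 + ∑ k, x k) := by
    intro x; rw [← Finset.sum_div]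
  have hsumψ : ∀ t : Fin m → ℝ, ∑ j, ψ t j = (∑ k, t k) / (1 - ∑ k, t k) := by
    intro t; rw [← Finset.sum_div]
  have hleft : ∀ x ∈ S, ψ (φ x) = x := by
    intro x hx
    have h1 := hSpos x hx
    funext j
    simp only [hψ, hsumφ x]
    rw [hφ]
    field_simp
    ring
  have hright : ∀ t ∈ T, φ (ψ t) = t := by
    intro t ht
    have h1 := hTpos t ht
    funext j
    simp only [hφ, hsumψ t]
    rw [hψ]
    field_simp
    ring
  have hinv : Set.InvOn ψ φ S T := ⟨fun x hx => hleft x hx, fun t ht => hright t ht⟩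
  have hbij : Set.BijOn φ S T := hinv.bijOn hmapsφ hmapsψ
  refine ⟨hbij, ?_⟩
  have hSmeas : MeasurableSet S := by
    have : S = ⋂ j, {x : Fin m → ℝ | 0 < x j} := by
      ext x; simp [hS, Set.mem_iInter]
    rw [this]
    exact MeasurableSet.iInter fun j => measurableSet_lt measurable_const (measurable_pi_apply j)
  have hφmeas : Measurable φ := by
    apply measurable_pi_lambda
    intro j
    exact (measurable_pi_apply j).div (by fun_prop)
  have hderiv : ∀ x ∈ S, HasFDerivWithinAt φ (Dphi m x) S x := by
    intro x hx
    exact (hasFDeriv_phi m x (hSpos x hx).ne').hasFDerivWithinAt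
  have key := map_withDensity_abs_det_fderiv_eq_addHaar (volume : Measure (Fin m → ℝ))
    hSmeas.nullMeasurableSet hderiv hbij.injOn
  rw [hbij.image_eq] at key
  rw [← key]
  congr 1
  apply withDensity_congr_ae
  filter_upwards [ae_restrict_mem hSmeas] with x hx
  have h1 := hSpos x hx
  rw [det_Dphi m x h1.ne']
  rw [abs_of_pos (by positivity)]
  congr 1
  rw [zpow_neg, zpow_natCast, hnm, inv_pow]
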